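/- Strong Number Avoidance Theorem: Let G be a short game that is not equivalent to any number, and let x be a number. Then G + x is equivalent to the game whose left options are exactly the games G^L + x (for G^L ranging over the left options of G) and whose right options are exactly the games G^R + x (for G^R ranging over the right options of G). -/

import Mathlib

universe u

namespace SetTheory

/-- Pre-games, as in the older Mathlib (`SetTheory.PGame`, removed since). -/
inductive PGame : Type (u + 1)
  | mk : ∀ α β : Type u, (α → PGame) → (β → PGame) → PGame

namespace PGame

def LeftMoves : PGame → Type u
  | mk l _ _ _ => l

def RightMoves : PGame → Type u
  | mk _ r _ _ => r

def moveLeft : ∀ g : PGame, LeftMoves g → PGame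
  | mk _l _ L _ => L

def moveRight : ∀ g : PGame, RightMoves g → PGame
  | mk _ _r _ R => R

/-- `(leLF x y).1` is `x ≤ y` and `(leLF x y).2` is `x ⧏ y`, as in the older Mathlib. -/
noncomputable def leLF (x : PGame.{u}) : PGame.{u} → Prop × Prop :=
  PGame.rec (motive := fun _ => PGame.{u} → Prop × Prop)
    (fun _xl _xr _xL _xR IHxl IHxr y =>
      PGame.rec (motive := fun _ => Prop × Prop)
        (fun yl yr yL yR IHyl IHyr =>
          ((∀ i, (IHxl i (mk yl yr yL yR)).2) ∧ ∀ j, (IHyr j).2,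
           (∃ i, (IHyl i).1) ∨ ∃ j, (IHxr j (mk yl yr yL yR)).1)) y) x

noncomputable instance : LE PGame.{u} := ⟨fun x y => (leLF x y).1⟩

noncomputable instance : LT PGame.{u} := ⟨fun x y => x ≤ y ∧ ¬ y ≤ x⟩

def Equiv (x y : PGame.{u}) : Prop := x ≤ y ∧ y ≤ x

instance : HasEquiv PGame.{u} := ⟨Equiv⟩

def Numeric : PGame.{u} → Prop
  | mk _ _ L R => (∀ i j, L i < R j) ∧ (∀ i, Numeric (L i)) ∧ ∀ j, Numeric (R j)

class inductive Short : PGame.{u} → Type (u + 1)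
  | mk :
    ∀ {α β : Type u} {L : α → PGame.{u}} {R : β → PGame.{u}} (_ : ∀ i : α, Short (L i))
      (_ : ∀ j : β, Short (R j)) [Fintype α] [Fintype β], Short ⟨α, β, L, R⟩

noncomputable instance : Add PGame.{u} :=
  ⟨fun x => PGame.rec (motive := fun _ => PGame.{u} → PGame.{u})
    (fun xl xr _xL _xR IHxl IHxr y =>
      PGame.rec (motive := fun _ => PGame.{u})
        (fun yl yr yL yR IHyl IHyr =>
          mk (xl ⊕ yl) (xr ⊕ yr)
            (Sum.rec (fun i => IHxl i (mk yl yr yL yR)) IHyl)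
            (Sum.rec (fun i => IHxr i (mk yl yr yL yR)) IHyr)) y) x⟩

end PGame

end SetTheory

open SetTheory PGame


noncomputable section

namespace SetTheory

namespace PGame

def LF (x y : PGame.{u}) : Prop := (leLF x y).2

infix:50 " ⧏ " => LF

theorem mk_le_mk {xl xr : Type u} {xL : xl → PGame.{u}} {xR : xr → PGame.{u}}
    {yl yr : Type u} {yL : yl → PGame.{u}} {yR : yr → PGame.{u}} :
    mk xl xr xL xR ≤ mk yl yr yL yR ↔
      (∀ i, xL i ⧏ mk yl yr yL yR) ∧ ∀ j, mk xl xr xL xR ⧏ yR j := Iff.rfl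

theorem mk_lf_mk {xl xr : Type u} {xL : xl → PGame.{u}} {xR : xr → PGame.{u}}
    {yl yr : Type u} {yL : yl → PGame.{u}} {yR : yr → PGame.{u}} :
    mk xl xr xL xR ⧏ mk yl yr yL yR ↔
      (∃ i, mk xl xr xL xR ≤ yL i) ∨ ∃ j, xR j ≤ mk yl yr yL yR := Iff.rfl

theorem le_iff_forall_lf {x y : PGame.{u}} :
    x ≤ y ↔ (∀ i, x.moveLeft i ⧏ y) ∧ ∀ j, x ⧏ y.moveRight j := by
  cases x; cases y; exact mk_le_mk

theorem lf_iff_exists_le {x y : PGame.{u}} :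
    x ⧏ y ↔ (∃ i, x ≤ y.moveLeft i) ∨ ∃ j, x.moveRight j ≤ y := by
  cases x; cases y; exact mk_lf_mk

theorem not_le_lf (x y : PGame.{u}) : (¬ x ≤ y ↔ y ⧏ x) ∧ (¬ x ⧏ y ↔ y ≤ x) := by
  induction x generalizing y with
  | mk xl xr xL xR ihxl ihxr =>
  induction y with
  | mk yl yr yL yR ihyl ihyr =>
  have h1 : ∀ i z, ¬ xL i ⧏ z ↔ z ≤ xL i := fun i z => (ihxl i z).2
  have h2 : ∀ j, ¬ mk xl xr xL xR ⧏ yR j ↔ yR j ≤ mk xl xr xL xR := fun j => (ihyr j).2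
  have h3 : ∀ i, ¬ mk xl xr xL xR ≤ yL i ↔ yL i ⧏ mk xl xr xL xR := fun i => (ihyl i).1
  have h4 : ∀ j z, ¬ xR j ≤ z ↔ z ⧏ xR j := fun j z => (ihxr j z).1
  rw [mk_le_mk, mk_le_mk, mk_lf_mk, mk_lf_mk]
  constructor
  · simp only [not_and_or, not_forall, h1, h2]
  · simp only [not_or, not_exists, h3, h4]

theorem not_le {x y : PGame.{u}} : ¬ x ≤ y ↔ y ⧏ x := (not_le_lf x y).1

theorem not_lf {x y : PGame.{u}} : ¬ x ⧏ y ↔ y ≤ x := (not_le_lf x y).2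

theorem lf_of_le_moveLeft {x y : PGame.{u}} {i : y.LeftMoves} (h : x ≤ y.moveLeft i) : x ⧏ y :=
  lf_iff_exists_le.2 (Or.inl ⟨i, h⟩)

theorem lf_of_moveRight_le {x y : PGame.{u}} {j : x.RightMoves} (h : x.moveRight j ≤ y) : x ⧏ y :=
  lf_iff_exists_le.2 (Or.inr ⟨j, h⟩)

theorem moveLeft_lf_of_le {x y : PGame.{u}} (h : x ≤ y) (i : x.LeftMoves) : x.moveLeft i ⧏ y :=
  (le_iff_forall_lf.1 h).1 i

theorem lf_moveRight_of_le {x y : PGame.{u}} (h : x ≤ y) (j : y.RightMoves) :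
    x ⧏ y.moveRight j :=
  (le_iff_forall_lf.1 h).2 j

theorem _root_.LE.le.moveLeft_lf {x y : PGame.{u}} (h : x ≤ y) (i : x.LeftMoves) :
    x.moveLeft i ⧏ y :=
  moveLeft_lf_of_le h i

theorem _root_.LE.le.lf_moveRight {x y : PGame.{u}} (h : x ≤ y) (j : y.RightMoves) :
    x ⧏ y.moveRight j :=
  lf_moveRight_of_le h j

theorem le_refl' (x : PGame.{u}) : x ≤ x := by
  induction x with
  | mk xl xr xL xR ihl ihr =>
  exact le_iff_forall_lf.2 ⟨fun i => lf_of_le_moveLeft (i := i) (ihl i),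
    fun j => lf_of_moveRight_le (j := j) (ihr j)⟩

theorem le_trans_aux (x y z : PGame.{u}) :
    (x ≤ y → y ≤ z → x ≤ z) ∧ (y ≤ z → z ≤ x → y ≤ x) ∧ (z ≤ x → x ≤ y → z ≤ y) := by
  induction x generalizing y z with
  | mk xl xr xL xR ihx1 ihx2 =>
  induction y generalizing z with
  | mk yl yr yL yR ihy1 ihy2 =>
  induction z with
  | mk zl zr zL zR ihz1 ihz2 =>
  refine ⟨fun h1 h2 => ?_, fun h1 h2 => ?_, fun h1 h2 => ?_⟩
  · refine le_iff_forall_lf.2 ⟨fun i => ?_, fun j => ?_⟩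
    · by_contra h
      rw [PGame.not_lf] at h
      exact PGame.not_lf.2 ((ihx1 i _ _).2.1 h2 h) (h1.moveLeft_lf i)
    · by_contra h
      rw [PGame.not_lf] at h
      exact PGame.not_lf.2 ((ihz2 j).2.2 h h1) (h2.lf_moveRight j)
  · refine le_iff_forall_lf.2 ⟨fun i => ?_, fun j => ?_⟩
    · by_contra h
      rw [PGame.not_lf] at h
      exact PGame.not_lf.2 ((ihy1 i _).2.2 h2 h) (h1.moveLeft_lf i)
    · by_contra h
      rw [PGame.not_lf] at h
      exact PGame.not_lf.2 ((ihx2 j _ _).1 h h1) (h2.lf_moveRight j)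
  · refine le_iff_forall_lf.2 ⟨fun i => ?_, fun j => ?_⟩
    · by_contra h
      rw [PGame.not_lf] at h
      exact PGame.not_lf.2 ((ihz1 i).1 h2 h) (h1.moveLeft_lf i)
    · by_contra h
      rw [PGame.not_lf] at h
      exact PGame.not_lf.2 ((ihy2 j _).2.1 h h1) (h2.lf_moveRight j)

theorem le_trans' {x y z : PGame.{u}} (h1 : x ≤ y) (h2 : y ≤ z) : x ≤ z :=
  (le_trans_aux x y z).1 h1 h2

instance : Preorder PGame.{u} :=
  { (inferInstance : LE PGame.{u}), (inferInstance : LT PGame.{u}) with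
    le_refl := le_refl'
    le_trans := fun _ _ _ => le_trans'
    lt_iff_le_not_ge := fun _ _ => Iff.rfl }

theorem lt_def' {x y : PGame.{u}} : x < y ↔ x ≤ y ∧ ¬ y ≤ x := Iff.rfl

theorem lt_iff_le_and_lf {x y : PGame.{u}} : x < y ↔ x ≤ y ∧ x ⧏ y :=
  lt_def'.trans (and_congr Iff.rfl PGame.not_le)

theorem lf_of_lt {x y : PGame.{u}} (h : x < y) : x ⧏ y := (lt_iff_le_and_lf.1 h).2

theorem moveLeft_lf {x : PGame.{u}} (i : x.LeftMoves) : x.moveLeft i ⧏ x :=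
  lf_of_le_moveLeft (i := i) (le_refl' _)

theorem lf_moveRight {x : PGame.{u}} (j : x.RightMoves) : x ⧏ x.moveRight j :=
  lf_of_moveRight_le (j := j) (le_refl' _)

theorem le_of_forall {x y : PGame.{u}} (hl : ∀ i, ∃ i', x.moveLeft i ≤ y.moveLeft i')
    (hr : ∀ j, ∃ j', x.moveRight j' ≤ y.moveRight j) : x ≤ y :=
  le_iff_forall_lf.2 ⟨fun i => let ⟨_, h⟩ := hl i; lf_of_le_moveLeft h,
    fun j => let ⟨_, h⟩ := hr j; lf_of_moveRight_le h⟩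

instance setoid : Setoid PGame.{u} :=
  ⟨Equiv, ⟨fun x => ⟨le_refl' x, le_refl' x⟩, fun h => ⟨h.2, h.1⟩,
    fun h1 h2 => ⟨le_trans' h1.1 h2.1, le_trans' h2.2 h1.2⟩⟩⟩

instance : Zero PGame.{u} := ⟨mk PEmpty PEmpty PEmpty.elim PEmpty.elim⟩

def neg : PGame.{u} → PGame.{u}
  | mk l r L R => mk r l (fun j => neg (R j)) (fun i => neg (L i))

instance : Neg PGame.{u} := ⟨neg⟩

@[elab_as_elim]
def moveRecOn {C : PGame.{u} → Sort*} (x : PGame.{u})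
    (IH : ∀ y : PGame.{u}, (∀ i, C (y.moveLeft i)) → (∀ j, C (y.moveRight j)) → C y) : C x :=
  x.recOn fun yl yr yL yR => IH (mk yl yr yL yR)

instance fintypeLeftMoves : ∀ (x : PGame.{u}) [Short x], Fintype x.LeftMoves
  | _, @Short.mk _ _ _ _ _ _ F _ => F

instance fintypeRightMoves : ∀ (x : PGame.{u}) [Short x], Fintype x.RightMoves
  | _, @Short.mk _ _ _ _ _ _ _ F => F

instance moveLeftShort : ∀ (x : PGame.{u}) [Short x] (i : x.LeftMoves), Short (x.moveLeft i)
  | _, @Short.mk _ _ _ _ sL _ _ _, i => sL i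

instance moveRightShort : ∀ (x : PGame.{u}) [Short x] (j : x.RightMoves), Short (x.moveRight j)
  | _, @Short.mk _ _ _ _ _ sR _ _, j => sR j

theorem Numeric.mk {x : PGame.{u}} (h₁ : ∀ i j, x.moveLeft i < x.moveRight j)
    (h₂ : ∀ i, (x.moveLeft i).Numeric) (h₃ : ∀ j, (x.moveRight j).Numeric) : x.Numeric := by
  cases x; exact ⟨h₁, h₂, h₃⟩

theorem Numeric.left_lt_right {x : PGame.{u}} (o : Numeric x) (i : x.LeftMoves)
    (j : x.RightMoves) : x.moveLeft i < x.moveRight j := by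
  cases x; exact o.1 i j

theorem Numeric.moveLeft {x : PGame.{u}} (o : Numeric x) (i : x.LeftMoves) :
    Numeric (x.moveLeft i) := by
  cases x; exact o.2.1 i

theorem Numeric.moveRight {x : PGame.{u}} (o : Numeric x) (j : x.RightMoves) :
    Numeric (x.moveRight j) := by
  cases x; exact o.2.2 j

theorem numeric_zero : Numeric (0 : PGame.{u}) :=
  Numeric.mk (fun i => PEmpty.elim i) (fun i => PEmpty.elim i) (fun j => PEmpty.elim j)

theorem lf_asymm_aux (x : PGame.{u}) :
    ∀ y : PGame.{u}, x.Numeric → y.Numeric → x ⧏ y → ¬ y ⧏ x := by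
  induction x with
  | mk xl xr xL xR ihxl ihxr =>
  intro y ox oy h₁ h₂
  cases y with
  | mk yl yr yL yR =>
  rcases lf_iff_exists_le.1 h₁ with ⟨i, h₁⟩ | ⟨j, h₁⟩ <;>
    rcases lf_iff_exists_le.1 h₂ with ⟨i', h₂⟩ | ⟨j', h₂⟩
  · exact ihxl i' (yL i) (ox.moveLeft i') (oy.moveLeft i) (h₁.moveLeft_lf i') (h₂.moveLeft_lf i)
  · exact (oy.left_lt_right i j').2 (le_trans' h₂ h₁)
  · exact (ox.left_lt_right i' j).2 (le_trans' h₁ h₂)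
  · exact ihxr j (yR j') (ox.moveRight j) (oy.moveRight j') (h₁.lf_moveRight j')
      (h₂.lf_moveRight j)

theorem le_of_lf {x y : PGame.{u}} (h : x ⧏ y) (ox : x.Numeric) (oy : y.Numeric) : x ≤ y :=
  PGame.not_lf.1 (lf_asymm_aux x y ox oy h)

theorem lt_of_lf {x y : PGame.{u}} (h : x ⧏ y) (ox : x.Numeric) (oy : y.Numeric) : x < y :=
  ⟨le_of_lf h ox oy, PGame.not_le.2 h⟩

theorem Numeric.moveLeft_lt {x : PGame.{u}} (o : x.Numeric) (i : x.LeftMoves) :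
    x.moveLeft i < x :=
  lt_of_lf (moveLeft_lf i) (o.moveLeft i) o

theorem Numeric.lt_moveRight {x : PGame.{u}} (o : x.Numeric) (j : x.RightMoves) :
    x < x.moveRight j :=
  lt_of_lf (lf_moveRight j) o (o.moveRight j)

theorem lt_or_equiv_or_gt {x y : PGame.{u}} (ox : x.Numeric) (oy : y.Numeric) :
    x < y ∨ x ≈ y ∨ y < x := by
  by_cases h1 : x ≤ y
  · by_cases h2 : y ≤ x
    · exact Or.inr (Or.inl ⟨h1, h2⟩)
    · exact Or.inl ⟨h1, h2⟩
  · exact Or.inr (Or.inr (lt_of_lf (PGame.not_le.1 h1) oy ox))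

theorem leftMoves_add (x y : PGame.{u}) : (x + y).LeftMoves = (x.LeftMoves ⊕ y.LeftMoves) := by
  cases x; cases y; rfl

theorem rightMoves_add (x y : PGame.{u}) :
    (x + y).RightMoves = (x.RightMoves ⊕ y.RightMoves) := by
  cases x; cases y; rfl

def toLeftMovesAdd {x y : PGame.{u}} : x.LeftMoves ⊕ y.LeftMoves ≃ (x + y).LeftMoves :=
  Equiv.cast (leftMoves_add x y).symm

def toRightMovesAdd {x y : PGame.{u}} : x.RightMoves ⊕ y.RightMoves ≃ (x + y).RightMoves :=
  Equiv.cast (rightMoves_add x y).symm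

theorem add_moveLeft_inl {x : PGame.{u}} (y : PGame.{u}) (i : x.LeftMoves) :
    (x + y).moveLeft (toLeftMovesAdd (Sum.inl i)) = x.moveLeft i + y := by
  cases x; cases y; rfl

theorem add_moveRight_inl {x : PGame.{u}} (y : PGame.{u}) (i : x.RightMoves) :
    (x + y).moveRight (toRightMovesAdd (Sum.inl i)) = x.moveRight i + y := by
  cases x; cases y; rfl

theorem add_moveLeft_inr (x : PGame.{u}) {y : PGame.{u}} (i : y.LeftMoves) :
    (x + y).moveLeft (toLeftMovesAdd (Sum.inr i)) = x + y.moveLeft i := by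
  cases x; cases y; rfl

theorem add_moveRight_inr (x : PGame.{u}) {y : PGame.{u}} (i : y.RightMoves) :
    (x + y).moveRight (toRightMovesAdd (Sum.inr i)) = x + y.moveRight i := by
  cases x; cases y; rfl

theorem leftMoves_add_cases {x y : PGame.{u}} (k : (x + y).LeftMoves)
    {P : (x + y).LeftMoves → Prop} (hl : ∀ i, P (toLeftMovesAdd (Sum.inl i)))
    (hr : ∀ i, P (toLeftMovesAdd (Sum.inr i))) : P k := by
  rw [← toLeftMovesAdd.apply_symm_apply k]
  rcases toLeftMovesAdd.symm k with i | i
  exacts [hl i, hr i]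

theorem rightMoves_add_cases {x y : PGame.{u}} (k : (x + y).RightMoves)
    {P : (x + y).RightMoves → Prop} (hl : ∀ i, P (toRightMovesAdd (Sum.inl i)))
    (hr : ∀ i, P (toRightMovesAdd (Sum.inr i))) : P k := by
  rw [← toRightMovesAdd.apply_symm_apply k]
  rcases toRightMovesAdd.symm k with i | i
  exacts [hl i, hr i]

theorem pg_add_lf_of_inl_le {a b c : PGame.{u}} (j : a.RightMoves) (h : a.moveRight j + b ≤ c) :
    a + b ⧏ c :=
  lf_of_moveRight_le (j := toRightMovesAdd (Sum.inl j)) (by rw [add_moveRight_inl]; exact h)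

theorem pg_add_lf_of_inr_le {a b c : PGame.{u}} (j : b.RightMoves) (h : a + b.moveRight j ≤ c) :
    a + b ⧏ c :=
  lf_of_moveRight_le (j := toRightMovesAdd (Sum.inr j)) (by rw [add_moveRight_inr]; exact h)

theorem pg_lf_add_of_le_inl {a b c : PGame.{u}} (i : a.LeftMoves) (h : c ≤ a.moveLeft i + b) :
    c ⧏ a + b :=
  lf_of_le_moveLeft (i := toLeftMovesAdd (Sum.inl i)) (by rw [add_moveLeft_inl]; exact h)

theorem pg_lf_add_of_le_inr {a b c : PGame.{u}} (i : b.LeftMoves) (h : c ≤ a + b.moveLeft i) :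
    c ⧏ a + b :=
  lf_of_le_moveLeft (i := toLeftMovesAdd (Sum.inr i)) (by rw [add_moveLeft_inr]; exact h)

theorem pg_add_comm_le (x y : PGame.{u}) : x + y ≤ y + x := by
  induction x generalizing y with
  | mk xl xr xL xR ihxl ihxr =>
  induction y with
  | mk yl yr yL yR ihyl ihyr =>
  refine le_of_forall ?_ ?_
  · rintro (i | i)
    · exact ⟨Sum.inr i, ihxl i _⟩
    · exact ⟨Sum.inl i, ihyl i⟩
  · rintro (j | j)
    · exact ⟨Sum.inr j, ihyr j⟩
    · exact ⟨Sum.inl j, ihxr j _⟩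

theorem pg_zero_add_le (x : PGame.{u}) : 0 + x ≤ x ∧ x ≤ 0 + x := by
  induction x with
  | mk xl xr xL xR ihl ihr =>
  constructor
  · refine le_of_forall ?_ ?_
    · rintro (i | i)
      · exact PEmpty.elim i
      · exact ⟨i, (ihl i).1⟩
    · intro j
      exact ⟨Sum.inr j, (ihr j).1⟩
  · refine le_of_forall ?_ ?_
    · intro i
      exact ⟨Sum.inr i, (ihl i).2⟩
    · rintro (j | j)
      · exact PEmpty.elim j
      · exact ⟨j, (ihr j).2⟩

theorem pg_add_assoc_le (x y z : PGame.{u}) :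
    (x + y + z ≤ x + (y + z)) ∧ (x + (y + z) ≤ x + y + z) := by
  induction x generalizing y z with
  | mk xl xr xL xR ihx1 ihx2 =>
  induction y generalizing z with
  | mk yl yr yL yR ihy1 ihy2 =>
  induction z with
  | mk zl zr zL zR ihz1 ihz2 =>
  constructor
  · refine le_of_forall ?_ ?_
    · rintro ((i | i) | i)
      · exact ⟨Sum.inl i, (ihx1 i _ _).1⟩
      · exact ⟨Sum.inr (Sum.inl i), (ihy1 i _).1⟩
      · exact ⟨Sum.inr (Sum.inr i), (ihz1 i).1⟩
    · rintro (i | i | i)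
      · exact ⟨Sum.inl (Sum.inl i), (ihx2 i _ _).1⟩
      · exact ⟨Sum.inl (Sum.inr i), (ihy2 i _).1⟩
      · exact ⟨Sum.inr i, (ihz2 i).1⟩
  · refine le_of_forall ?_ ?_
    · rintro (i | i | i)
      · exact ⟨Sum.inl (Sum.inl i), (ihx1 i (mk yl yr yL yR) (mk zl zr zL zR)).2⟩
      · exact ⟨Sum.inl (Sum.inr i), (ihy1 i _).2⟩
      · exact ⟨Sum.inr i, (ihz1 i).2⟩
    · rintro ((i | i) | i)
      · exact ⟨Sum.inl i, (ihx2 i (mk yl yr yL yR) (mk zl zr zL zR)).2⟩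
      · exact ⟨Sum.inr (Sum.inl i), (ihy2 i _).2⟩
      · exact ⟨Sum.inr (Sum.inr i), (ihz2 i).2⟩

theorem pg_neg_add_le (x : PGame.{u}) : -x + x ≤ 0 ∧ 0 ≤ -x + x := by
  induction x with
  | mk xl xr xL xR ihl ihr =>
  constructor
  · refine le_iff_forall_lf.2 ⟨?_, fun j => PEmpty.elim j⟩
    rintro (i | i)
    · show -(xR i) + mk xl xr xL xR ⧏ 0
      exact pg_add_lf_of_inr_le (b := mk xl xr xL xR) i (ihr i).1
    · show -(mk xl xr xL xR) + xL i ⧏ 0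
      exact pg_add_lf_of_inl_le (a := -(mk xl xr xL xR)) i (ihl i).1
  · refine le_iff_forall_lf.2 ⟨fun i => PEmpty.elim i, ?_⟩
    rintro (i | i)
    · show 0 ⧏ -(xL i) + mk xl xr xL xR
      exact pg_lf_add_of_le_inr (b := mk xl xr xL xR) i (ihl i).2
    · show 0 ⧏ -(mk xl xr xL xR) + xR i
      exact pg_lf_add_of_le_inl (a := -(mk xl xr xL xR)) i (ihr i).2

theorem pg_neg_le_neg_lf (x y : PGame.{u}) : (x ≤ y → -y ≤ -x) ∧ (x ⧏ y → -y ⧏ -x) := by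
  induction x generalizing y with
  | mk xl xr xL xR ihxl ihxr =>
  induction y with
  | mk yl yr yL yR ihyl ihyr =>
  constructor
  · intro h
    refine le_iff_forall_lf.2 ⟨fun j => ?_, fun i => ?_⟩
    · exact (ihyr j).2 (lf_moveRight_of_le h j)
    · exact (ihxl i _).2 (moveLeft_lf_of_le h i)
  · intro h
    rcases lf_iff_exists_le.1 h with ⟨i, h'⟩ | ⟨j, h'⟩
    · exact lf_of_moveRight_le (x := -(mk yl yr yL yR)) (j := i) ((ihyl i).1 h')
    · exact lf_of_le_moveLeft (y := -(mk xl xr xL xR)) (i := j) ((ihxr j _).1 h')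

theorem pg_add_le_add_left_lf (x y z : PGame.{u}) :
    (y ≤ z → x + y ≤ x + z) ∧ (y ⧏ z → x + y ⧏ x + z) := by
  induction x generalizing y z with
  | mk xl xr xL xR ihx1 ihx2 =>
  induction y generalizing z with
  | mk yl yr yL yR ihy1 ihy2 =>
  induction z with
  | mk zl zr zL zR ihz1 ihz2 =>
  constructor
  · intro h
    refine le_iff_forall_lf.2 ⟨?_, ?_⟩
    · rintro (i | i)
      · exact lf_of_le_moveLeft (i := Sum.inl i) ((ihx1 i _ _).1 h)
      · exact (ihy1 i _).2 (moveLeft_lf_of_le h i)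
    · rintro (j | j)
      · exact lf_of_moveRight_le (j := Sum.inl j) ((ihx2 j _ _).1 h)
      · exact (ihz2 j).2 (lf_moveRight_of_le h j)
  · intro h
    rcases lf_iff_exists_le.1 h with ⟨k, h'⟩ | ⟨j, h'⟩
    · exact lf_of_le_moveLeft (i := Sum.inr k) ((ihz1 k).1 h')
    · exact lf_of_moveRight_le (j := Sum.inr j) ((ihy2 j _).1 h')

theorem pg_add_le_add_left {x y z : PGame.{u}} (h : y ≤ z) : x + y ≤ x + z :=
  (pg_add_le_add_left_lf x y z).1 h

theorem pg_add_le_add_right {x y z : PGame.{u}} (h : y ≤ z) : y + x ≤ z + x :=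
  le_trans' (pg_add_comm_le y x) (le_trans' (pg_add_le_add_left h) (pg_add_comm_le x z))

theorem pg_neg_le_neg {x y : PGame.{u}} (h : x ≤ y) : -y ≤ -x := (pg_neg_le_neg_lf x y).1 h

theorem pg_neg_neg (x : PGame.{u}) : -(-x) = x := by
  induction x with
  | mk xl xr xL xR ihl ihr =>
  show mk xl xr (fun i => -(-(xL i))) (fun j => -(-(xR j))) = mk xl xr xL xR
  simp only [ihl, ihr]

theorem neg_le_neg_iff {x y : PGame.{u}} : -y ≤ -x ↔ x ≤ y :=
  ⟨fun h => by have := pg_neg_le_neg h; rwa [pg_neg_neg, pg_neg_neg] at this, pg_neg_le_neg⟩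

theorem pg_neg_lt_neg {x y : PGame.{u}} (h : x < y) : -y < -x :=
  ⟨pg_neg_le_neg h.1, PGame.not_le.2 ((pg_neg_le_neg_lf x y).2 (PGame.not_le.1 h.2))⟩

theorem Numeric.neg {x : PGame.{u}} (o : x.Numeric) : (-x).Numeric := by
  induction x with
  | mk xl xr xL xR ihl ihr =>
  obtain ⟨h1, h2, h3⟩ := o
  exact Numeric.mk (fun j i => pg_neg_lt_neg (h1 i j)) (fun j => ihr j (h3 j))
    (fun i => ihl i (h2 i))

theorem pg_add_congr {a₁ a₂ b₁ b₂ : PGame.{u}} (ha : a₁ ≈ a₂) (hb : b₁ ≈ b₂) :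
    a₁ + b₁ ≈ a₂ + b₂ :=
  ⟨le_trans' (pg_add_le_add_right ha.1) (pg_add_le_add_left hb.1),
    le_trans' (pg_add_le_add_right ha.2) (pg_add_le_add_left hb.2)⟩

theorem pg_neg_congr {a b : PGame.{u}} (h : a ≈ b) : -a ≈ -b :=
  ⟨pg_neg_le_neg h.2, pg_neg_le_neg h.1⟩

end PGame

abbrev Game := Quotient PGame.setoid

namespace Game

open PGame

instance : LE Game.{u} :=
  ⟨Quotient.lift₂ (fun x y : PGame.{u} => x ≤ y) fun _ _ _ _ ha hb =>
    propext ⟨fun h => le_trans' (le_trans' ha.2 h) hb.1,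
      fun h => le_trans' (le_trans' ha.1 h) hb.2⟩⟩

instance instPreorderGame : Preorder Game.{u} where
  le := (· ≤ ·)
  lt a b := a ≤ b ∧ ¬ b ≤ a
  le_refl := by rintro ⟨x⟩; exact le_refl' x
  le_trans := by rintro ⟨x⟩ ⟨y⟩ ⟨z⟩; exact fun h1 h2 => le_trans' h1 h2
  lt_iff_le_not_ge _ _ := Iff.rfl

instance : PartialOrder Game.{u} where
  le_antisymm := by rintro ⟨x⟩ ⟨y⟩ h1 h2; exact Quot.sound ⟨h1, h2⟩

instance : Zero Game.{u} := ⟨⟦0⟧⟩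

instance : Add Game.{u} :=
  ⟨Quotient.map₂ (· + ·) (by intro a₁ a₂ ha b₁ b₂ hb; exact pg_add_congr ha hb)⟩

instance : Neg Game.{u} :=
  ⟨Quotient.map (fun x => -x) (by intro a b h; exact pg_neg_congr h)⟩

instance : AddCommGroup Game.{u} where
  add_assoc := by
    rintro ⟨x⟩ ⟨y⟩ ⟨z⟩
    exact Quot.sound (show PGame.Equiv _ _ from pg_add_assoc_le x y z)
  zero_add := by
    rintro ⟨x⟩
    exact Quot.sound (show PGame.Equiv _ _ from pg_zero_add_le x)
  add_zero := by
    rintro ⟨x⟩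
    exact Quot.sound (show PGame.Equiv (x + 0) x from
      ⟨le_trans' (pg_add_comm_le x 0) (pg_zero_add_le x).1,
        le_trans' (pg_zero_add_le x).2 (pg_add_comm_le 0 x)⟩)
  nsmul := nsmulRec
  zsmul := zsmulRec
  neg_add_cancel := by
    rintro ⟨x⟩
    exact Quot.sound (show PGame.Equiv _ _ from pg_neg_add_le x)
  add_comm := by
    rintro ⟨x⟩ ⟨y⟩
    exact Quot.sound (show PGame.Equiv _ _ from ⟨pg_add_comm_le x y, pg_add_comm_le y x⟩)

instance : IsOrderedAddMonoid Game.{u} where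
  add_le_add_left := by
    rintro ⟨a⟩ ⟨b⟩ h ⟨c⟩
    exact pg_add_le_add_right h

end Game

namespace PGame

theorem pg_add_lf_add_of_lf_of_le {a b c d : PGame.{u}} (h1 : a ⧏ b) (h2 : c ≤ d) :
    a + c ⧏ b + d := by
  rw [← PGame.not_le]
  intro h
  have h3 : (⟦b⟧ : Game) + ⟦c⟧ ≤ ⟦a⟧ + ⟦c⟧ :=
    (add_le_add (le_refl (⟦b⟧ : Game)) (show (⟦c⟧ : Game) ≤ ⟦d⟧ from h2)).trans
      (show (⟦b⟧ : Game) + ⟦d⟧ ≤ ⟦a⟧ + ⟦c⟧ from h)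
  exact PGame.not_le.2 h1 (show (⟦b⟧ : Game) ≤ ⟦a⟧ from le_of_add_le_add_right h3)

theorem pg_add_lt_add_right {a b : PGame.{u}} (h : a < b) (c : PGame.{u}) : a + c < b + c :=
  show (⟦a⟧ : Game) + ⟦c⟧ < ⟦b⟧ + ⟦c⟧ from
    add_lt_add_of_lt_of_le (show (⟦a⟧ : Game) < ⟦b⟧ from h) le_rfl

theorem pg_add_lt_add_left {a b : PGame.{u}} (h : a < b) (c : PGame.{u}) : c + a < c + b :=
  show (⟦c⟧ : Game) + ⟦a⟧ < ⟦c⟧ + ⟦b⟧ from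
    add_lt_add_of_le_of_lt le_rfl (show (⟦a⟧ : Game) < ⟦b⟧ from h)

theorem numeric_add_aux (x : PGame.{u}) :
    ∀ y : PGame.{u}, x.Numeric → y.Numeric → (x + y).Numeric := by
  induction x with
  | mk xl xr xL xR ihxl ihxr =>
  intro y
  induction y with
  | mk yl yr yL yR ihyl ihyr =>
  intro ox oy
  obtain ⟨hx1, hx2, hx3⟩ := id ox
  obtain ⟨hy1, hy2, hy3⟩ := id oy
  refine Numeric.mk ?_ ?_ ?_
  · rintro (ix | iy) (jx | jy)
    · exact pg_add_lt_add_right (hx1 ix jx) _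
    · exact lt_of_lf (pg_add_lf_add_of_lf_of_le (moveLeft_lf (x := mk xl xr xL xR) ix)
        (oy.lt_moveRight jy).le) (ihxl ix _ (hx2 ix) oy) (ihyr jy ox (hy3 jy))
    · exact lt_of_lf (pg_add_lf_add_of_lf_of_le (lf_moveRight (x := mk xl xr xL xR) jx)
        (oy.moveLeft_lt iy).le) (ihyl iy ox (hy2 iy)) (ihxr jx _ (hx3 jx) oy)
    · exact pg_add_lt_add_left (hy1 iy jy) (mk xl xr xL xR)
  · rintro (i | i)
    · exact ihxl i _ (hx2 i) oy
    · exact ihyl i ox (hy2 i)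
  · rintro (j | j)
    · exact ihxr j _ (hx3 j) oy
    · exact ihyr j ox (hy3 j)

theorem Numeric.add {x y : PGame.{u}} (ox : x.Numeric) (oy : y.Numeric) : (x + y).Numeric :=
  numeric_add_aux x y ox oy

end PGame

end SetTheory

end

open SetTheory PGame


namespace StrongAvoidance

theorem gq_le {x y : PGame.{u}} : ((⟦x⟧ : Game) ≤ ⟦y⟧) ↔ x ≤ y := Iff.rfl
theorem gq_lt {x y : PGame.{u}} : ((⟦x⟧ : Game) < ⟦y⟧) ↔ x < y := Iff.rfl
theorem gq_add (x y : PGame.{u}) : (⟦x + y⟧ : Game) = ⟦x⟧ + ⟦y⟧ := rfl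
theorem gq_neg (x : PGame.{u}) : (⟦-x⟧ : Game) = -(⟦x⟧ : Game) := rfl

/-- the game `-k` for a natural `k`, with no left options -/
def nN : ℕ → PGame.{u}
  | 0 => PGame.mk PEmpty PEmpty PEmpty.elim PEmpty.elim
  | k + 1 => PGame.mk PEmpty PUnit PEmpty.elim fun _ => nN k

theorem nN_numeric : ∀ k, (nN.{u} k).Numeric
  | 0 => Numeric.mk (fun i => i.elim) (fun i => i.elim) fun j => j.elim
  | k + 1 => Numeric.mk (fun i => i.elim) (fun i => i.elim) fun _ => nN_numeric k

theorem nN_succ_lt (k : ℕ) : nN.{u} (k + 1) < nN k :=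
  (nN_numeric (k + 1)).lt_moveRight PUnit.unit

theorem nN_le {k K : ℕ} (h : k ≤ K) : nN.{u} K ≤ nN k := by
  induction K with
  | zero => cases Nat.le_zero.1 h; exact le_rfl
  | succ K ih =>
    rcases Nat.lt_or_ge k (K + 1) with h' | h'
    · exact (nN_succ_lt K).le.trans (ih (Nat.lt_succ_iff.1 h'))
    · rw [le_antisymm h h']

theorem nN_lt {k K : ℕ} (h : k < K) : nN.{u} K < nN k :=
  lt_of_le_of_lt (nN_le h) (nN_succ_lt k)

/-- the game `+k` for a natural `k`, with no right options -/
def pN : ℕ → PGame.{u}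
  | 0 => PGame.mk PEmpty PEmpty PEmpty.elim PEmpty.elim
  | k + 1 => PGame.mk PUnit PEmpty (fun _ => pN k) PEmpty.elim

theorem pN_numeric : ∀ k, (pN.{u} k).Numeric
  | 0 => Numeric.mk (fun i => i.elim) (fun i => i.elim) fun j => j.elim
  | k + 1 => Numeric.mk (fun _ j => j.elim) (fun _ => pN_numeric k) fun j => j.elim

theorem pN_lt_succ (k : ℕ) : pN.{u} k < pN (k + 1) :=
  (pN_numeric (k + 1)).moveLeft_lt PUnit.unit

theorem pN_le {k K : ℕ} (h : k ≤ K) : pN.{u} k ≤ pN K := by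
  induction K with
  | zero => cases Nat.le_zero.1 h; exact le_rfl
  | succ K ih =>
    rcases Nat.lt_or_ge k (K + 1) with h' | h'
    · exact (ih (Nat.lt_succ_iff.1 h')).trans (pN_lt_succ K).le
    · rw [le_antisymm h h']

theorem pN_lt {k K : ℕ} (h : k < K) : pN.{u} k < pN K :=
  lt_of_lt_of_le (pN_lt_succ k) (pN_le h)

instance nN_leftMoves_isEmpty (k : ℕ) : IsEmpty (nN.{u} k).LeftMoves := by
  cases k <;> exact ⟨fun i => i.elim⟩

instance : IsEmpty (nN.{u} 0).RightMoves := ⟨fun j => j.elim⟩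

instance : IsEmpty (pN.{u} 0).LeftMoves := ⟨fun i => i.elim⟩

instance pN_rightMoves_isEmpty (k : ℕ) : IsEmpty (pN.{u} k).RightMoves := by
  cases k <;> exact ⟨fun i => i.elim⟩

theorem exists_nN_le (G : PGame.{u}) : ∀ _ : G.Short, ∃ k, nN k ≤ G := by
  induction G using PGame.moveRecOn with
  | _ G ihl ihr =>
    intro S
    haveI := S
    classical
    choose f hf using fun j => ihr j inferInstance
    refine ⟨Finset.univ.sup fun j => f j + 1, le_iff_forall_lf.2 ⟨fun i => isEmptyElim i, fun j => ?_⟩⟩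
    refine lf_of_lt (lt_of_lt_of_le (nN_lt ?_) (hf j))
    exact Nat.lt_of_lt_of_le (Nat.lt_succ_self _) (Finset.le_sup (f := fun j => f j + 1) (Finset.mem_univ j))

theorem exists_le_pN (G : PGame.{u}) : ∀ _ : G.Short, ∃ k, G ≤ pN k := by
  induction G using PGame.moveRecOn with
  | _ G ihl ihr =>
    intro S
    haveI := S
    classical
    choose f hf using fun i => ihl i inferInstance
    refine ⟨Finset.univ.sup fun i => f i + 1, le_iff_forall_lf.2 ⟨fun i => ?_, fun j => isEmptyElim j⟩⟩
    refine lf_of_lt (lt_of_le_of_lt (hf i) (pN_lt ?_))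
    exact Nat.lt_of_lt_of_le (Nat.lt_succ_self _) (Finset.le_sup (f := fun i => f i + 1) (Finset.mem_univ i))

theorem equiv_num_of_isEmpty_left (G : PGame.{u}) (S : G.Short) (h : IsEmpty G.LeftMoves) :
    ∃ z, z.Numeric ∧ (G ≈ z) := by
  haveI := S; haveI := h
  classical
  have hT : ∃ k : ℕ, ∀ j, nN.{u} k ⧏ G.moveRight j := by
    choose f hf using fun j => exists_nN_le (G.moveRight j) inferInstance
    refine ⟨Finset.univ.sup fun j => f j + 1, fun j => lf_of_lt (lt_of_lt_of_le (nN_lt ?_) (hf j))⟩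
    exact Nat.lt_of_lt_of_le (Nat.lt_succ_self _) (Finset.le_sup (f := fun j => f j + 1) (Finset.mem_univ j))
  obtain ⟨m, hm, hmin⟩ : ∃ m : ℕ, (∀ j, nN.{u} m ⧏ G.moveRight j) ∧
      ∀ m' < m, ¬∀ j, nN.{u} m' ⧏ G.moveRight j :=
    ⟨Nat.find hT, Nat.find_spec hT, fun m' h' => Nat.find_min hT h'⟩
  have hmle : nN m ≤ G := le_iff_forall_lf.2 ⟨fun i => isEmptyElim i, hm⟩
  refine ⟨nN m, nN_numeric m, ?_, hmle⟩
  cases m with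
  | zero => exact le_iff_forall_lf.2 ⟨fun i => isEmptyElim i, fun j => isEmptyElim j⟩
  | succ m =>
    obtain ⟨j₀, hj₀⟩ := not_forall.1 (hmin m (Nat.lt_succ_self m))
    have hj₀' : G.moveRight j₀ ≤ nN m := PGame.not_lf.1 hj₀
    exact le_iff_forall_lf.2 ⟨fun i => isEmptyElim i,
      fun j => @lf_of_moveRight_le G (nN m) j₀ hj₀'⟩

theorem equiv_num_of_isEmpty_right (G : PGame.{u}) (S : G.Short) (h : IsEmpty G.RightMoves) :
    ∃ z, z.Numeric ∧ (G ≈ z) := by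
  haveI := S; haveI := h
  classical
  have hT : ∃ k : ℕ, ∀ i, G.moveLeft i ⧏ pN.{u} k := by
    choose f hf using fun i => exists_le_pN (G.moveLeft i) inferInstance
    refine ⟨Finset.univ.sup fun i => f i + 1, fun i => lf_of_lt (lt_of_le_of_lt (hf i) (pN_lt ?_))⟩
    exact Nat.lt_of_lt_of_le (Nat.lt_succ_self _) (Finset.le_sup (f := fun i => f i + 1) (Finset.mem_univ i))
  obtain ⟨m, hm, hmin⟩ : ∃ m : ℕ, (∀ i, G.moveLeft i ⧏ pN.{u} m) ∧
      ∀ m' < m, ¬∀ i, G.moveLeft i ⧏ pN.{u} m' :=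
    ⟨Nat.find hT, Nat.find_spec hT, fun m' h' => Nat.find_min hT h'⟩
  have hmle : G ≤ pN m := le_iff_forall_lf.2 ⟨hm, fun j => isEmptyElim j⟩
  refine ⟨pN m, pN_numeric m, hmle, ?_⟩
  cases m with
  | zero => exact le_iff_forall_lf.2 ⟨fun i => isEmptyElim i, fun j => isEmptyElim j⟩
  | succ m =>
    obtain ⟨i₀, hi₀⟩ := not_forall.1 (hmin m (Nat.lt_succ_self m))
    have hi₀' : pN m ≤ G.moveLeft i₀ := PGame.not_lf.1 hi₀
    exact le_iff_forall_lf.2 ⟨fun i => @lf_of_le_moveLeft (pN m) G i₀ hi₀',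
      fun j => isEmptyElim j⟩

theorem num_le_total {a b : PGame.{u}} (ha : a.Numeric) (hb : b.Numeric) : a ≤ b ∨ b ≤ a := by
  rcases PGame.lt_or_equiv_or_gt ha hb with h | h | h
  exacts [Or.inl h.le, Or.inl h.1, Or.inr h.le]

theorem exists_max_aux {ι : Type u} [Fintype ι] (f : ι → PGame.{u})
    (hf : ∀ i, (f i).Numeric) (s : Finset ι) (hs : s.Nonempty) :
    ∃ i₀ ∈ s, ∀ i ∈ s, f i ≤ f i₀ := by
  classical
  induction s using Finset.induction_on with
  | empty => simp at hs
  | @insert a s ha ih =>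
    · rcases s.eq_empty_or_nonempty with rfl | hs'
      · exact ⟨a, Finset.mem_insert_self a _, by simp⟩
      · obtain ⟨b, hb, hmax⟩ := ih hs'
        rcases num_le_total (hf a) (hf b) with h | h
        · refine ⟨b, Finset.mem_insert_of_mem hb, fun i hi => ?_⟩
          rcases Finset.mem_insert.1 hi with rfl | hi
          exacts [h, hmax i hi]
        · refine ⟨a, Finset.mem_insert_self a _, fun i hi => ?_⟩
          rcases Finset.mem_insert.1 hi with rfl | hi
          exacts [le_rfl, (hmax i hi).trans h]

theorem exists_max {ι : Type u} [Fintype ι] [Nonempty ι] (f : ι → PGame.{u})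
    (hf : ∀ i, (f i).Numeric) : ∃ i₀, ∀ i, f i ≤ f i₀ := by
  obtain ⟨i₀, _, h⟩ := exists_max_aux f hf Finset.univ Finset.univ_nonempty
  exact ⟨i₀, fun i => h i (Finset.mem_univ i)⟩

theorem exists_min {ι : Type u} [Fintype ι] [Nonempty ι] (f : ι → PGame.{u})
    (hf : ∀ i, (f i).Numeric) : ∃ i₀, ∀ i, f i₀ ≤ f i := by
  obtain ⟨i₀, h⟩ := exists_max (fun i => -f i) fun i => (hf i).neg
  exact ⟨i₀, fun i => PGame.neg_le_neg_iff.1 (h i)⟩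

theorem stops (G : PGame.{u}) : ∀ _ : G.Short,
    ∃ ℓ r : PGame.{u}, ℓ.Numeric ∧ r.Numeric ∧
      (∀ y, y.Numeric → ℓ < y → G < y) ∧
      (∀ y, y.Numeric → y < r → y < G) ∧
      (∀ y, y.Numeric → y < ℓ → y ⧏ G) ∧
      (∀ y, y.Numeric → r < y → G ⧏ y) ∧
      ((∃ z, z.Numeric ∧ (G ≈ z)) ∨
        ((∃ i, ∀ y, y.Numeric → y < ℓ → y < G.moveLeft i) ∧
         (∃ j, ∀ y, y.Numeric → r < y → G.moveRight j < y))) := by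
  induction G using PGame.moveRecOn with
  | _ G ihl ihr =>
  intro S
  haveI := S
  classical
  by_cases hnum : ∃ z, z.Numeric ∧ (G ≈ z)
  · obtain ⟨z, hz, he⟩ := hnum
    refine ⟨z, z, hz, hz, fun y hy h => lt_of_le_of_lt he.1 h,
      fun y hy h => lt_of_lt_of_le h he.2,
      fun y hy h => lf_of_lt (lt_of_lt_of_le h he.2),
      fun y hy h => lf_of_lt (lt_of_le_of_lt he.1 h),
      Or.inl ⟨z, hz, he⟩⟩
  · have hLne : Nonempty G.LeftMoves := by
      rcases isEmpty_or_nonempty G.LeftMoves with h | h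
      · exact absurd (equiv_num_of_isEmpty_left G S h) hnum
      · exact h
    have hRne : Nonempty G.RightMoves := by
      rcases isEmpty_or_nonempty G.RightMoves with h | h
      · exact absurd (equiv_num_of_isEmpty_right G S h) hnum
      · exact h
    choose ℓL rL hL1 hL2 hL3 hL4 hL5 hL6 hL7 using fun i => ihl i inferInstance
    choose ℓR rR hR1 hR2 hR3 hR4 hR5 hR6 hR7 using fun j => ihr j inferInstance
    obtain ⟨iS, hiS⟩ := exists_max rL hL2
    obtain ⟨jS, hjS⟩ := exists_min ℓR hR1
    set ℓ : PGame.{u} := rL iS with hℓdef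
    set r : PGame.{u} := ℓR jS with hrdef
    have ℓn : ℓ.Numeric := hL2 iS
    have rn : r.Numeric := hR1 jS
    -- all left options are ⧏ anything above ℓ
    have hCw : ∀ y, y.Numeric → ℓ < y → ∀ i, G.moveLeft i ⧏ y := fun y hy h i =>
      hL6 i y hy (lt_of_le_of_lt (hiS i) h)
    -- anything below r is ⧏ all right options
    have hDw : ∀ y, y.Numeric → y < r → ∀ j, y ⧏ G.moveRight j := fun y hy h j =>
      hR5 j y hy (lt_of_lt_of_le h (hjS j))
    -- (C)
    have hC : ∀ y, y.Numeric → y < ℓ → y ⧏ G := by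
      intro y hy h
      rw [← PGame.not_le]
      intro hGy
      exact (PGame.not_le.2 (hGy.moveLeft_lf iS)) (hL4 iS y hy h).le
    -- (D)
    have hD : ∀ y, y.Numeric → r < y → G ⧏ y := by
      intro y hy h
      rw [← PGame.not_le]
      intro hyG
      exact (PGame.not_le.2 (hyG.lf_moveRight jS)) (hR3 jS y hy h).le
    -- r ≤ ℓ
    have hrℓ : r ≤ ℓ := by
      by_contra hcon
      have hℓr : ℓ < r := by
        rcases PGame.lt_or_equiv_or_gt ℓn rn with h | h | h
        · exact h
        · exact absurd h.2 hcon
        · exact absurd h.le hcon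
      apply hnum
      have hℓG : ℓ ≤ G := le_iff_forall_lf.2
        ⟨fun a => hC (ℓ.moveLeft a) (ℓn.moveLeft a) (ℓn.moveLeft_lt a),
         fun j => hDw ℓ ℓn hℓr j⟩
      have hGr : G ≤ r := le_iff_forall_lf.2
        ⟨fun i => hCw r rn hℓr i,
         fun b => hD (r.moveRight b) (rn.moveRight b) (rn.lt_moveRight b)⟩
      by_cases hGℓ : G ≤ ℓ
      · exact ⟨ℓ, ℓn, hGℓ, hℓG⟩
      by_cases hrG : r ≤ G
      · exact ⟨r, rn, hGr, hrG⟩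
      have hℓlf : ℓ ⧏ G := PGame.not_le.1 hGℓ
      have hGlf : G ⧏ r := PGame.not_le.1 hrG
      have hz : (PGame.mk PUnit PUnit (fun _ => ℓ) (fun _ => r)).Numeric :=
        Numeric.mk (fun _ _ => hℓr) (fun _ => ℓn) (fun _ => rn)
      refine ⟨PGame.mk PUnit PUnit (fun _ => ℓ) (fun _ => r), hz,
        le_iff_forall_lf.2 ⟨fun i => hCw _ hz (hz.moveLeft_lt PUnit.unit) i,
          fun u => hGlf⟩,
        le_iff_forall_lf.2 ⟨fun u => hℓlf,
          fun j => hDw _ hz (hz.lt_moveRight PUnit.unit) j⟩⟩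
    -- (A)
    have hA : ∀ y, y.Numeric → ℓ < y → G < y := by
      intro y
      induction y using PGame.moveRecOn with
      | _ y ihyl ihyr =>
      intro hy h
      have hle : G ≤ y := le_iff_forall_lf.2
        ⟨fun i => hCw y hy h i,
         fun b => lf_of_lt (ihyr b (hy.moveRight b) (h.trans (hy.lt_moveRight b)))⟩
      have hlf : G ⧏ y := by
        rw [← PGame.not_le]
        intro hyG
        exact (PGame.not_le.2 (hyG.lf_moveRight jS))
          (hR3 jS y hy (lt_of_le_of_lt hrℓ h)).le
      exact PGame.lt_iff_le_and_lf.2 ⟨hle, hlf⟩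
    -- (B)
    have hB : ∀ y, y.Numeric → y < r → y < G := by
      intro y
      induction y using PGame.moveRecOn with
      | _ y ihyl ihyr =>
      intro hy h
      have hle : y ≤ G := le_iff_forall_lf.2
        ⟨fun a => lf_of_lt (ihyl a (hy.moveLeft a) ((hy.moveLeft_lt a).trans h)),
         fun j => hDw y hy h j⟩
      have hlf : y ⧏ G := by
        rw [← PGame.not_le]
        intro hGy
        exact (PGame.not_le.2 (hGy.moveLeft_lf iS)) (hL4 iS y hy (lt_of_lt_of_le h hrℓ)).le
      exact PGame.lt_iff_le_and_lf.2 ⟨hle, hlf⟩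
    exact ⟨ℓ, r, ℓn, rn, hA, hB, hC, hD,
      Or.inr ⟨⟨iS, fun y hy h => hL4 iS y hy h⟩, ⟨jS, fun y hy h => hR3 jS y hy h⟩⟩⟩

theorem exists_left_incentive (G : PGame.{u}) (S : G.Short)
    (hG : ∀ z : PGame.{u}, z.Numeric → ¬(G ≈ z)) (d : PGame.{u}) (hd : d.Numeric)
    (hpos : 0 < d) : ∃ i, G ≤ G.moveLeft i + d := by
  obtain ⟨ℓ, r, ℓn, rn, hA, hB, hC, hD, hE⟩ := stops G S
  rcases hE with ⟨z, hz, he⟩ | ⟨⟨i, hi⟩, -⟩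
  · exact absurd he (hG z hz)
  have hd'n : (PGame.mk PUnit PUnit (fun _ => 0) (fun _ => d)).Numeric :=
    Numeric.mk (fun _ _ => hpos) (fun _ => numeric_zero) (fun _ => hd)
  set d' : PGame.{u} := PGame.mk PUnit PUnit (fun _ => 0) (fun _ => d) with hd'def
  have h0d' : (0 : PGame.{u}) < d' := hd'n.moveLeft_lt PUnit.unit
  have hd'd : d' < d := hd'n.lt_moveRight PUnit.unit
  have key1 : G < ℓ + d' := by
    refine hA (ℓ + d') (ℓn.add hd'n) (gq_lt.1 ?_)
    have h1 : (⟦ℓ⟧ : Game) < ⟦ℓ⟧ + ⟦d'⟧ :=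
      lt_add_of_pos_right _ (show (0 : Game) < ⟦d'⟧ from h0d')
    rwa [← gq_add] at h1
  have key2 : ℓ + d' + -d < G.moveLeft i := by
    refine hi (ℓ + d' + -d) ((ℓn.add hd'n).add hd.neg) (gq_lt.1 ?_)
    have hdd : (⟦d'⟧ : Game) < ⟦d⟧ := hd'd
    have h1 : (⟦ℓ⟧ : Game) + ⟦d'⟧ + -⟦d⟧ < ⟦ℓ⟧ := by
      calc (⟦ℓ⟧ : Game) + ⟦d'⟧ + -⟦d⟧ = ⟦ℓ⟧ + (⟦d'⟧ - ⟦d⟧) := by abel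
      _ < ⟦ℓ⟧ + 0 := add_lt_add_right (sub_neg.2 hdd) _
      _ = ⟦ℓ⟧ := add_zero _
    rwa [← gq_neg, ← gq_add, ← gq_add] at h1
  refine ⟨i, gq_le.1 ?_⟩
  have k1 : (⟦G⟧ : Game) < ⟦ℓ⟧ + ⟦d'⟧ := by
    have := gq_lt.2 key1; rwa [gq_add] at this
  have k2 : (⟦ℓ⟧ : Game) + ⟦d'⟧ - ⟦d⟧ < ⟦G.moveLeft i⟧ := by
    have := gq_lt.2 key2; rw [gq_add, gq_add, gq_neg] at this
    rwa [← sub_eq_add_neg] at this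
  have k3 : (⟦ℓ⟧ : Game) + ⟦d'⟧ < ⟦G.moveLeft i⟧ + ⟦d⟧ := sub_lt_iff_lt_add.1 k2
  rw [gq_add]
  exact (k1.trans k3).le

theorem exists_right_incentive (G : PGame.{u}) (S : G.Short)
    (hG : ∀ z : PGame.{u}, z.Numeric → ¬(G ≈ z)) (d : PGame.{u}) (hd : d.Numeric)
    (hpos : 0 < d) : ∃ j, G.moveRight j ≤ G + d := by
  obtain ⟨ℓ, r, ℓn, rn, hA, hB, hC, hD, hE⟩ := stops G S
  rcases hE with ⟨z, hz, he⟩ | ⟨-, ⟨j, hj⟩⟩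
  · exact absurd he (hG z hz)
  have hd'n : (PGame.mk PUnit PUnit (fun _ => 0) (fun _ => d)).Numeric :=
    Numeric.mk (fun _ _ => hpos) (fun _ => numeric_zero) (fun _ => hd)
  set d' : PGame.{u} := PGame.mk PUnit PUnit (fun _ => 0) (fun _ => d) with hd'def
  have h0d' : (0 : PGame.{u}) < d' := hd'n.moveLeft_lt PUnit.unit
  have hd'd : d' < d := hd'n.lt_moveRight PUnit.unit
  have key1 : r + -d' < G := by
    refine hB (r + -d') (rn.add hd'n.neg) (gq_lt.1 ?_)
    have h1 : (⟦r⟧ : Game) + -⟦d'⟧ < ⟦r⟧ := by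
      calc (⟦r⟧ : Game) + -⟦d'⟧ < ⟦r⟧ + 0 :=
        add_lt_add_right (neg_neg_iff_pos.2 (show (0 : Game) < ⟦d'⟧ from h0d')) _
      _ = ⟦r⟧ := add_zero _
    rwa [← gq_neg, ← gq_add] at h1
  have key2 : G.moveRight j < r + d + -d' := by
    refine hj (r + d + -d') ((rn.add hd).add hd'n.neg) (gq_lt.1 ?_)
    have hdd : (⟦d'⟧ : Game) < ⟦d⟧ := hd'd
    have h1 : (⟦r⟧ : Game) < ⟦r⟧ + ⟦d⟧ + -⟦d'⟧ := by
      calc (⟦r⟧ : Game) = ⟦r⟧ + 0 := (add_zero _).symm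
      _ < ⟦r⟧ + (⟦d⟧ - ⟦d'⟧) := add_lt_add_right (sub_pos.2 hdd) _
      _ = ⟦r⟧ + ⟦d⟧ + -⟦d'⟧ := by abel
    rwa [← gq_neg, ← gq_add, ← gq_add] at h1
  refine ⟨j, gq_le.1 ?_⟩
  have k1 : (⟦r⟧ : Game) + -⟦d'⟧ < ⟦G⟧ := by
    have := gq_lt.2 key1; rwa [gq_add, gq_neg] at this
  have k2 : (⟦G.moveRight j⟧ : Game) < ⟦r⟧ + ⟦d⟧ + -⟦d'⟧ := by
    have := gq_lt.2 key2; rwa [gq_add, gq_add, gq_neg] at this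
  have k3 : (⟦r⟧ : Game) + ⟦d⟧ + -⟦d'⟧ = (⟦r⟧ + -⟦d'⟧) + ⟦d⟧ := by abel
  rw [gq_add]
  exact (k2.trans_le (by rw [k3]; exact add_le_add_left k1.le _)).le

end StrongAvoidance

open StrongAvoidance in
/-- Strong Number Avoidance Theorem: if `G` is a short game not equivalent to any
number and `x` is a number, then `G + x` is equivalent to the game whose left
options are the `G^L + x` and whose right options are the `G^R + x`. -/
theorem strong_number_avoidance (G : PGame) [G.Short]
    (hG : ∀ y : PGame, y.Numeric → ¬ (G ≈ y))
    (x : PGame) (hx : x.Numeric) :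
    G + x ≈ PGame.mk G.LeftMoves G.RightMoves
      (fun i => G.moveLeft i + x) (fun j => G.moveRight j + x) := by
  set H := PGame.mk G.LeftMoves G.RightMoves
    (fun i => G.moveLeft i + x) (fun j => G.moveRight j + x) with hHdef
  constructor
  · -- G + x ≤ H
    refine le_iff_forall_lf.2 ⟨fun k => ?_, fun j => ?_⟩
    · refine PGame.leftMoves_add_cases (P := fun k => (G + x).moveLeft k ⧏ H) k (fun i => ?_) (fun a => ?_)
      · rw [PGame.add_moveLeft_inl]
        exact lf_of_le_moveLeft (i := i) le_rfl
      · rw [PGame.add_moveLeft_inr]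
        have hd : (x + -x.moveLeft a).Numeric := hx.add (hx.moveLeft a).neg
        have hpos : (0 : PGame) < x + -x.moveLeft a := by
          refine gq_lt.1 ?_
          have h2 : (0 : Game) < ⟦x⟧ + -⟦x.moveLeft a⟧ := by
            rw [← sub_eq_add_neg]
            exact sub_pos.2 (show (⟦x.moveLeft a⟧ : Game) < ⟦x⟧ from hx.moveLeft_lt a)
          rwa [← gq_neg, ← gq_add] at h2
        obtain ⟨i, hi⟩ := exists_left_incentive G ‹G.Short› hG _ hd hpos
        refine lf_of_le_moveLeft (i := i) ?_
        show G + x.moveLeft a ≤ G.moveLeft i + x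
        refine gq_le.1 ?_
        have k1 : (⟦G⟧ : Game) ≤ ⟦G.moveLeft i⟧ + (⟦x⟧ + -⟦x.moveLeft a⟧) := by
          have := gq_le.2 hi
          rwa [gq_add, gq_add, gq_neg] at this
        have k2 : (⟦G⟧ : Game) + ⟦x.moveLeft a⟧ ≤ ⟦G.moveLeft i⟧ + ⟦x⟧ := by
          calc (⟦G⟧ : Game) + ⟦x.moveLeft a⟧
              ≤ ⟦G.moveLeft i⟧ + (⟦x⟧ + -⟦x.moveLeft a⟧) + ⟦x.moveLeft a⟧ :=
                add_le_add_left k1 _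
            _ = ⟦G.moveLeft i⟧ + ⟦x⟧ := by abel
        rw [gq_add, gq_add]
        exact k2
    · show G + x ⧏ G.moveRight j + x
      have h : (G + x).moveRight (PGame.toRightMovesAdd (Sum.inl j)) = G.moveRight j + x :=
        PGame.add_moveRight_inl (x := G) x j
      rw [← h]
      exact PGame.lf_moveRight _
  · -- H ≤ G + x
    refine le_iff_forall_lf.2 ⟨fun i => ?_, fun k => ?_⟩
    · show G.moveLeft i + x ⧏ G + x
      have h : (G + x).moveLeft (PGame.toLeftMovesAdd (Sum.inl i)) = G.moveLeft i + x :=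
        PGame.add_moveLeft_inl (x := G) x i
      rw [← h]
      exact PGame.moveLeft_lf _
    · refine PGame.rightMoves_add_cases (P := fun k => H ⧏ (G + x).moveRight k) k (fun j => ?_) (fun b => ?_)
      · rw [PGame.add_moveRight_inl]
        exact lf_of_moveRight_le (j := j) le_rfl
      · rw [PGame.add_moveRight_inr]
        have hd : (x.moveRight b + -x).Numeric := (hx.moveRight b).add hx.neg
        have hpos : (0 : PGame) < x.moveRight b + -x := by
          refine gq_lt.1 ?_
          have h2 : (0 : Game) < ⟦x.moveRight b⟧ + -⟦x⟧ := by
            rw [← sub_eq_add_neg]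
            exact sub_pos.2 (show (⟦x⟧ : Game) < ⟦x.moveRight b⟧ from hx.lt_moveRight b)
          rwa [← gq_neg, ← gq_add] at h2
        obtain ⟨j, hj⟩ := exists_right_incentive G ‹G.Short› hG _ hd hpos
        refine lf_of_moveRight_le (j := j) ?_
        show G.moveRight j + x ≤ G + x.moveRight b
        refine gq_le.1 ?_
        have k1 : (⟦G.moveRight j⟧ : Game) ≤ ⟦G⟧ + (⟦x.moveRight b⟧ + -⟦x⟧) := by
          have := gq_le.2 hj
          rwa [gq_add, gq_add, gq_neg] at this
        have k2 : (⟦G.moveRight j⟧ : Game) + ⟦x⟧ ≤ ⟦G⟧ + ⟦x.moveRight b⟧ := by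
          calc (⟦G.moveRight j⟧ : Game) + ⟦x⟧
              ≤ ⟦G⟧ + (⟦x.moveRight b⟧ + -⟦x⟧) + ⟦x⟧ := add_le_add_left k1 _
            _ = ⟦G⟧ + ⟦x.moveRight b⟧ := by abel
        rw [gq_add, gq_add]
        exact k2
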